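/- (Proposition 1: sparsity of the approximate solution) Let P : ℝⁿ → ℝᵐ be continuously differentiable, u⁰ = 0, s = ‖P(0)‖_∞ > 0, and let μ, L > 0 and ρ > 0 satisfy: ‖P'(u)ᵀh‖_∞ ≥ μ‖h‖₁ for all h ∈ ℝᵐ and all u ∈ B_ρ = {u : ‖u‖₁ ≤ ρ}; ‖(P'(a) − P'(b))v‖_∞ ≤ L‖a−b‖₁‖v‖₁ for all a, b ∈ B_ρ, v ∈ ℝⁿ; and ρ ≥ (μ/L)·(k_max + 2H₀(v̄/2)), where k_max = max{0, ⌈2Ls/μ²⌉ − 2} and v̄ = Ls/μ² − k_max/2; assume v̄ < 1, 0 < ε < μ²v̄/L, and set K_ε = k_max + ⌈log₂(log_{v̄/2}(εL/(2μ²)))⌉. Then there exists a vector û ∈ ℝⁿ with at most K_ε·m nonzero coordinates such that ‖P(û)‖_∞ ≤ ε; namely, û = u^{K_ε} for a damped sparse-Newton sequence from u⁰ = 0 in which each step direction wᵏ is a minimal-ℓ1-norm solution of P'(uᵏ)w = P(uᵏ) having at most m nonzero coordinates. -/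

import Mathlib

open Filter Topology

/-- The ℓ1-norm on `ℝ^d`: `‖x‖₁ = Σᵢ |xᵢ|`. -/
noncomputable def l1Norm {d : ℕ} (x : Fin d → ℝ) : ℝ := ∑ i, |x i|

/-- The ℓ∞-norm on `ℝ^d`: `‖x‖_∞ = maxᵢ |xᵢ|`. -/
noncomputable def linfNorm {d : ℕ} (x : Fin d → ℝ) : ℝ := ⨆ i, |x i|

/-- `H₀(δ) = Σ_{ℓ=0}^∞ δ^(2^ℓ)`. -/
noncomputable def H0 (δ : ℝ) : ℝ := ∑' ℓ : ℕ, δ ^ (2 ^ ℓ)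

/-- The transpose of a continuous linear map `A : ℝⁿ → ℝᵐ` applied to `h ∈ ℝᵐ`:
`(Aᵀ h)ᵢ = Σⱼ Aⱼᵢ hⱼ` where `Aⱼᵢ = (A eᵢ)ⱼ`. -/
noncomputable def transposeApply {n m : ℕ} (A : (Fin n → ℝ) →L[ℝ] (Fin m → ℝ))
    (h : Fin m → ℝ) : Fin n → ℝ :=
  fun i => ∑ j, A (Pi.single i 1) j * h j


open Set
lemma l1_nonneg {d : ℕ} (x : Fin d → ℝ) : 0 ≤ l1Norm x :=
  Finset.sum_nonneg fun i _ => abs_nonneg _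

lemma abs_le_l1 {d : ℕ} (x : Fin d → ℝ) (i : Fin d) : |x i| ≤ l1Norm x :=
  Finset.single_le_sum (fun j _ => abs_nonneg (x j)) (Finset.mem_univ i)

lemma linf_eq_norm {d : ℕ} (x : Fin d → ℝ) : linfNorm x = ‖x‖ := by
  rcases Nat.eq_zero_or_pos d with h | h
  · subst h
    rw [Subsingleton.elim x 0, norm_zero, linfNorm]
    exact Real.iSup_of_isEmpty _
  · haveI : Nonempty (Fin d) := Fin.pos_iff_nonempty.mp h
    apply le_antisymm
    · exact ciSup_le fun i => norm_le_pi_norm x i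
    · rw [pi_norm_le_iff_of_nonneg]
      · intro i
        have := le_ciSup (f := fun j => |x j|) (Set.Finite.bddAbove (Set.finite_range _)) i
        simpa [linfNorm] using this
      · exact le_ciSup_of_le (f := fun j => |x j|) (Set.Finite.bddAbove (Set.finite_range _)) (Classical.arbitrary _) (abs_nonneg _)

lemma linf_nonneg {d : ℕ} (x : Fin d → ℝ) : 0 ≤ linfNorm x := by
  rw [linf_eq_norm]; exact norm_nonneg x

lemma linf_le_l1 {d : ℕ} (x : Fin d → ℝ) : linfNorm x ≤ l1Norm x := by
  rcases Nat.eq_zero_or_pos d with h | h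
  · subst h; rw [linfNorm, Real.iSup_of_isEmpty]; exact l1_nonneg x
  · haveI : Nonempty (Fin d) := Fin.pos_iff_nonempty.mp h
    exact ciSup_le fun i => abs_le_l1 x i

lemma abs_le_linf {d : ℕ} (x : Fin d → ℝ) (i : Fin d) : |x i| ≤ linfNorm x := by
  rw [linf_eq_norm]; exact norm_le_pi_norm x i

lemma l1_eq_zero {d : ℕ} {x : Fin d → ℝ} (h : l1Norm x ≤ 0) : x = 0 := by
  funext i
  have := abs_le_l1 x i
  have : |x i| ≤ 0 := this.trans h
  simpa using le_antisymm this (abs_nonneg _)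

lemma linf_eq_zero {d : ℕ} {x : Fin d → ℝ} (h : linfNorm x ≤ 0) : x = 0 := by
  rw [linf_eq_norm] at h
  simpa using le_antisymm h (norm_nonneg x)

lemma l1_smul {d : ℕ} (c : ℝ) (x : Fin d → ℝ) : l1Norm (c • x) = |c| * l1Norm x := by
  simp [l1Norm, Finset.mul_sum, abs_mul]

lemma l1_add_le {d : ℕ} (x y : Fin d → ℝ) : l1Norm (x + y) ≤ l1Norm x + l1Norm y := by
  calc ∑ i, |(x + y) i| ≤ ∑ i, (|x i| + |y i|) := Finset.sum_le_sum fun i _ => abs_add_le _ _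
  _ = l1Norm x + l1Norm y := Finset.sum_add_distrib

lemma l1_continuous {d : ℕ} : Continuous (l1Norm (d := d)) := by
  unfold l1Norm
  exact continuous_finset_sum _ fun i _ => (continuous_apply i).abs

lemma l1_convex {d : ℕ} : ConvexOn ℝ Set.univ (l1Norm (d := d)) := by
  constructor
  · exact convex_univ
  · intro x _ y _ a b ha hb _
    calc l1Norm (a • x + b • y) ≤ l1Norm (a • x) + l1Norm (b • y) := l1_add_le _ _
    _ = a * l1Norm x + b * l1Norm y := by rw [l1_smul, l1_smul, abs_of_nonneg ha, abs_of_nonneg hb]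
    _ ≤ _ := le_refl _

/-- supremum of |·| is attained -/
lemma linf_attained {d : ℕ} (hd : 0 < d) (x : Fin d → ℝ) : ∃ i, linfNorm x = |x i| := by
  haveI : Nonempty (Fin d) := Fin.pos_iff_nonempty.mp hd
  obtain ⟨i, hi⟩ := Finite.exists_max fun i => |x i|
  refine ⟨i, le_antisymm (ciSup_le hi) (abs_le_linf x i)⟩

/-- Hölder -/
lemma abs_dot_le {d : ℕ} (x y : Fin d → ℝ) : |∑ j, x j * y j| ≤ l1Norm x * linfNorm y := by
  calc |∑ j, x j * y j| ≤ ∑ j, |x j * y j| := Finset.abs_sum_le_sum_abs _ _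
    _ ≤ ∑ j, |x j| * linfNorm y := by
        refine Finset.sum_le_sum fun j _ => ?_
        rw [abs_mul]
        exact mul_le_mul_of_nonneg_left (abs_le_linf y j) (abs_nonneg _)
    _ = l1Norm x * linfNorm y := by rw [l1Norm, ← Finset.sum_mul]

/-- a bounded solution to `A w = b` exists. -/
lemma exists_bounded_solution {n m : ℕ} (A : (Fin n → ℝ) →L[ℝ] (Fin m → ℝ))
    {μ : ℝ} (hμ : 0 < μ) (hA : ∀ h : Fin m → ℝ, μ * l1Norm h ≤ linfNorm (transposeApply A h))
    (b : Fin m → ℝ) {r : ℝ} (hr : 0 ≤ r) (hbr : linfNorm b ≤ μ * r) :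
    ∃ w, A w = b ∧ l1Norm w ≤ r := by
  by_cases hb : b = 0
  · exact ⟨0, by simp [hb], by simpa [l1Norm] using hr⟩
  have hbpos : 0 < linfNorm b := by
    rcases lt_or_ge 0 (linfNorm b) with h | h
    · exact h
    · exact absurd (linf_eq_zero h) hb
  have hrpos : 0 < r := by nlinarith
  have hn : 0 < n := by
    rcases Nat.eq_zero_or_pos n with h | h
    · exfalso
      have h2 := hA b
      have h0 : linfNorm (transposeApply A b) = 0 := by
        subst h; exact Real.iSup_of_isEmpty _
      rw [h0] at h2
      have : l1Norm b ≤ 0 := by nlinarith [l1_nonneg b]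
      exact hb (l1_eq_zero this)
    · exact h
  -- the compact convex image
  set Ball : Set (Fin n → ℝ) := {w | l1Norm w ≤ r} with hBall
  have hBconv : Convex ℝ Ball := by
    intro x hx y hy a c ha hc hac
    simp only [hBall, Set.mem_setOf_eq] at *
    calc l1Norm (a • x + c • y) ≤ l1Norm (a • x) + l1Norm (c • y) := l1_add_le _ _
      _ = a * l1Norm x + c * l1Norm y := by
          rw [l1_smul, l1_smul, abs_of_nonneg ha, abs_of_nonneg hc]
      _ ≤ a * r + c * r := by
          exact add_le_add (mul_le_mul_of_nonneg_left hx ha) (mul_le_mul_of_nonneg_left hy hc)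
      _ = r := by rw [← add_mul, hac, one_mul]
  have hBcompact : IsCompact Ball := by
    refine (isCompact_closedBall (0 : Fin n → ℝ) r).of_isClosed_subset ?_ ?_
    · exact isClosed_le l1_continuous continuous_const
    · intro w hw
      rw [Metric.mem_closedBall, dist_zero_right]
      exact (linf_eq_norm w ▸ linf_le_l1 w).trans hw
  set K : Set (Fin m → ℝ) := A '' Ball with hK
  have hKconv : Convex ℝ K := hBconv.linear_image A.toLinearMap
  have hKclosed : IsClosed K := (hBcompact.image A.continuous).isClosed
  by_contra hcon
  push_neg at hcon
  have hbK : b ∉ K := by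
    rintro ⟨w, hw, hwb⟩
    exact absurd hw (not_le.mpr (lt_of_not_ge fun h => absurd hwb (fun e => (hcon w e).not_ge h)))
  obtain ⟨f, u, hfK, hub⟩ := geometric_hahn_banach_closed_point hKconv hKclosed hbK
  -- decompose f
  set h : Fin m → ℝ := fun j => f (Pi.single j 1) with hh
  have hfy : ∀ y : Fin m → ℝ, f y = ∑ j, y j * h j := by
    intro y
    have hy : y = ∑ j, y j • (Pi.single j 1 : Fin m → ℝ) := by
      ext k
      simp [Pi.single_apply]
    conv_lhs => rw [hy]
    rw [map_sum]
    congr 1; ext j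
    rw [map_smul, smul_eq_mul]
  set c : Fin n → ℝ := transposeApply A h with hc
  have hfAw : ∀ w : Fin n → ℝ, f (A w) = ∑ i, w i * c i := by
    intro w
    rw [hfy]
    have hAw : ∀ j, (A w) j = ∑ i, w i * A (Pi.single i 1) j := by
      intro j
      have hw : w = ∑ i, w i • (Pi.single i 1 : Fin n → ℝ) := by
        ext k; simp [Pi.single_apply]
      conv_lhs => rw [hw, map_sum]
      rw [Finset.sum_apply]
      congr 1; ext i
      rw [map_smul]; rfl
    calc ∑ j, (A w) j * h j = ∑ j, ∑ i, (w i * A (Pi.single i 1) j) * h j := by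
          refine Finset.sum_congr rfl fun j _ => ?_
          rw [hAw j, Finset.sum_mul]
      _ = ∑ i, ∑ j, (w i * A (Pi.single i 1) j) * h j := Finset.sum_comm
      _ = ∑ i, w i * c i := by
          refine Finset.sum_congr rfl fun i _ => ?_
          rw [hc, transposeApply, Finset.mul_sum]
          refine Finset.sum_congr rfl fun j _ => ?_
          ring
  obtain ⟨i₀, hi₀⟩ := linf_attained hn c
  set σ : ℝ := if 0 ≤ c i₀ then r else -r with hσ
  set w₀ : Fin n → ℝ := σ • (Pi.single i₀ 1 : Fin n → ℝ) with hw₀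
  have hl1single : l1Norm (Pi.single i₀ (1:ℝ)) = 1 := by
    rw [l1Norm]
    rw [Finset.sum_eq_single i₀]
    · simp
    · intro j _ hj; simp [Pi.single_apply, hj]
    · intro hj; exact absurd (Finset.mem_univ i₀) hj
  have habsσ : |σ| = r := by
    rw [hσ]; split
    · exact abs_of_nonneg hr
    · rw [abs_neg, abs_of_nonneg hr]
  have hw₀Ball : w₀ ∈ Ball := by
    simp only [hBall, Set.mem_setOf_eq, hw₀, l1_smul, hl1single, mul_one, habsσ, le_refl]
  have hfw₀ : f (A w₀) = r * |c i₀| := by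
    rw [hfAw]
    rw [Finset.sum_eq_single i₀]
    · rw [hw₀]
      simp only [Pi.smul_apply, Pi.single_eq_same, smul_eq_mul, mul_one]
      rw [hσ]
      rcases le_or_gt 0 (c i₀) with h | h
      · rw [if_pos h, abs_of_nonneg h]
      · rw [if_neg (not_le.mpr h), abs_of_neg h]; ring
    · intro j _ hj
      rw [hw₀]
      simp [Pi.single_apply, hj]
    · intro hj; exact absurd (Finset.mem_univ i₀) hj
  have key1 : r * linfNorm c < u := by
    have h3 := hfK _ ⟨w₀, hw₀Ball, rfl⟩
    rw [hfw₀, ← hi₀] at h3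
    exact h3
  have key2 : f b ≤ r * linfNorm c := by
    rw [hfy]
    calc ∑ j, b j * h j ≤ |∑ j, b j * h j| := le_abs_self _
      _ = |∑ j, h j * b j| := by congr 1; exact Finset.sum_congr rfl fun j _ => mul_comm _ _
      _ ≤ l1Norm h * linfNorm b := abs_dot_le h b
      _ ≤ l1Norm h * (μ * r) := mul_le_mul_of_nonneg_left hbr (l1_nonneg h)
      _ = r * (μ * l1Norm h) := by ring
      _ ≤ r * linfNorm (transposeApply A h) := mul_le_mul_of_nonneg_left (hA h) hr
      _ = r * linfNorm c := rfl
  linarith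

/-- reduce the support of a minimal-norm solution -/
lemma reduce_support {n m : ℕ} (A : (Fin n → ℝ) →L[ℝ] (Fin m → ℝ)) (b : Fin m → ℝ)
    (w : Fin n → ℝ) (hw : A w = b) (hmin : ∀ v, A v = b → l1Norm w ≤ l1Norm v)
    (hcard : m < (Finset.univ.filter (fun i => w i ≠ 0)).card) :
    ∃ w', A w' = b ∧ l1Norm w' = l1Norm w ∧
      (Finset.univ.filter (fun i => w' i ≠ 0)).card
        < (Finset.univ.filter (fun i => w i ≠ 0)).card := by
  classical
  set T := Finset.univ.filter (fun i => w i ≠ 0) with hT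
  have hmemT : ∀ i, i ∈ T ↔ w i ≠ 0 := by intro i; simp [hT]
  set sgn : Fin n → ℝ := fun i => if 0 < w i then 1 else -1 with hsgn
  have hsgn1 : ∀ i, sgn i = 1 ∨ sgn i = -1 := by
    intro i; rw [hsgn]; dsimp only; split <;> simp
  have habs : ∀ i ∈ T, |w i| = sgn i * w i := by
    intro i hi
    have hwi := (hmemT i).mp hi
    rcases lt_trichotomy 0 (w i) with h | h | h
    · simp [hsgn, h, abs_of_pos h]
    · exact absurd h.symm hwi
    · simp [hsgn, not_lt.mpr h.le, abs_of_neg h]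
  -- l1 norm along a line, given sign preservation
  have hline : ∀ z : Fin n → ℝ, (∀ i, i ∉ T → z i = 0) → ∀ t : ℝ,
      (∀ i ∈ T, 0 ≤ sgn i * (w i + t * z i)) →
      l1Norm (w + t • z) = l1Norm w + t * ∑ i ∈ T, sgn i * z i := by
    intro z hzT t ht
    have hsplit : ∀ i, |w i + t * z i| = if i ∈ T then sgn i * (w i + t * z i) else 0 := by
      intro i
      by_cases hi : i ∈ T
      · rw [if_pos hi]
        have h1 := ht i hi
        rcases hsgn1 i with h2 | h2 <;> rw [h2] at h1 ⊢
        · rw [one_mul] at h1 ⊢; exact abs_of_nonneg h1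
        · rw [neg_one_mul] at h1 ⊢
          rw [abs_of_nonpos (by linarith)]
      · rw [if_neg hi]
        have h1 : w i = 0 := by_contra fun h => hi ((hmemT i).mpr h)
        rw [h1, hzT i hi, mul_zero, add_zero, abs_zero]
    calc l1Norm (w + t • z) = ∑ i, |w i + t * z i| := by
          refine Finset.sum_congr rfl fun i _ => ?_
          simp [smul_eq_mul]
      _ = ∑ i, (if i ∈ T then sgn i * (w i + t * z i) else 0) :=
          Finset.sum_congr rfl fun i _ => hsplit i
      _ = ∑ i ∈ T, sgn i * (w i + t * z i) := by rw [Finset.sum_ite_mem, Finset.univ_inter]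
      _ = ∑ i ∈ T, (sgn i * w i + t * (sgn i * z i)) := by
          refine Finset.sum_congr rfl fun i _ => ?_; ring
      _ = (∑ i ∈ T, sgn i * w i) + t * ∑ i ∈ T, sgn i * z i := by
          rw [Finset.sum_add_distrib, Finset.mul_sum]
      _ = l1Norm w + t * ∑ i ∈ T, sgn i * z i := by
          congr 1
          rw [l1Norm, ← Finset.sum_subset (Finset.subset_univ T)]
          · exact Finset.sum_congr rfl fun i hi => (habs i hi).symm
          · intro i _ hi
            have h1 : w i = 0 := by_contra fun h => hi ((hmemT i).mpr h)
            rw [h1, abs_zero]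
  -- a nonzero kernel vector supported in T
  have hdep : ¬ LinearIndependent ℝ (fun i : T => A (Pi.single i.1 1)) := by
    intro hli
    have := hli.fintype_card_le_finrank
    rw [Module.finrank_fintype_fun_eq_card, Fintype.card_coe, Fintype.card_fin] at this
    omega
  obtain ⟨g, hgsum, i₁, hgi₁⟩ := Fintype.not_linearIndependent_iff.mp hdep
  set z : Fin n → ℝ := fun i => if h : i ∈ T then g ⟨i, h⟩ else 0 with hz
  have hzT : ∀ i, i ∉ T → z i = 0 := by intro i hi; simp [hz, hi]
  have hzmem : ∀ (i : Fin n) (h : i ∈ T), z i = g ⟨i, h⟩ := by intro i h; simp [hz, h]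
  have hAz : A z = 0 := by
    have hzsum : z = ∑ i : T, g i • (Pi.single i.1 1 : Fin n → ℝ) := by
      funext j
      rw [Finset.sum_apply]
      by_cases hj : j ∈ T
      · rw [hzmem j hj, Finset.sum_eq_single (⟨j, hj⟩ : T)]
        · simp
        · intro i _ hij
          have h2 : i.1 ≠ j := fun h => hij (Subtype.ext h)
          simp [Pi.single_apply, h2, Ne.symm h2]
        · intro h; exact absurd (Finset.mem_univ _) h
      · rw [hzT j hj]
        symm
        apply Finset.sum_eq_zero
        intro i _
        have h2 : j ≠ i.1 := fun h => hj (h ▸ i.2)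
        simp [Pi.single_apply, h2]
    rw [hzsum, map_sum, ← hgsum]
    exact Finset.sum_congr rfl fun i _ => map_smul A _ _
  -- minimum modulus on the support
  have hTne : T.Nonempty := ⟨i₁.1, i₁.2⟩
  obtain ⟨ι₀, hι₀T, hι₀min⟩ := T.exists_min_image (fun i => |w i|) hTne
  have hε₀ : 0 < |w ι₀| := abs_pos.mpr ((hmemT ι₀).mp hι₀T)
  -- the derivative of the l1 norm along z vanishes
  have hσ0 : ∑ i ∈ T, sgn i * z i = 0 := by
    set σ : ℝ := ∑ i ∈ T, sgn i * z i with hσ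
    by_contra hσne
    set δ : ℝ := |w ι₀| / (2 * (l1Norm z + 1)) with hδ
    have hl1z : 0 ≤ l1Norm z := l1_nonneg z
    have hδpos : 0 < δ := by positivity
    set t : ℝ := -(σ / |σ|) * δ with htdef
    have habsσ : (0:ℝ) < |σ| := abs_pos.mpr hσne
    have habst : |t| = δ := by
      rw [htdef, abs_mul, abs_neg, abs_div, abs_abs, div_self (ne_of_gt habsσ), one_mul,
        abs_of_pos hδpos]
    have htσ : t * σ = -(δ * |σ|) := by
      have h1 : σ * σ = |σ| * |σ| := (abs_mul_abs_self σ).symm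
      have h2 : σ / |σ| * σ = |σ| := by
        rw [div_mul_eq_mul_div, h1, mul_div_assoc, div_self (ne_of_gt habsσ), mul_one]
      calc t * σ = -(δ * (σ / |σ| * σ)) := by rw [htdef]; ring
        _ = -(δ * |σ|) := by rw [h2]
    have hsmall : ∀ i ∈ T, 0 ≤ sgn i * (w i + t * z i) := by
      intro i hi
      have h1 : |t * z i| ≤ δ * l1Norm z := by
        rw [abs_mul, habst]
        exact mul_le_mul_of_nonneg_left (abs_le_l1 z i) hδpos.le
      have h2 : δ * l1Norm z < |w ι₀| := by
        rw [hδ, div_mul_eq_mul_div, div_lt_iff₀ (by positivity)]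
        nlinarith
      have h3 : |t * z i| < |w i| := lt_of_le_of_lt h1 (h2.trans_le (hι₀min i hi))
      have h4 : |sgn i * (t * z i)| = |t * z i| := by
        rcases hsgn1 i with h | h <;> rw [h] <;> simp
      have h5 : -(|t * z i|) ≤ sgn i * (t * z i) := by
        rw [← h4]; exact neg_abs_le _
      have h6 : sgn i * (w i + t * z i) = sgn i * w i + sgn i * (t * z i) := by ring
      rw [h6, ← habs i hi]
      linarith
    have hcontra := hline z hzT t hsmall
    rw [← hσ, htσ] at hcontra
    have hAb : A (w + t • z) = b := by
      rw [map_add, map_smul, hAz, smul_zero, add_zero, hw]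
    have := hmin _ hAb
    nlinarith
  -- choose the direction of z with a positive crossing
  have hratio : ∀ (zz : Fin n → ℝ) (i : Fin n), i ∈ T → zz i ≠ 0 →
      w i / zz i ≠ 0 := by
    intro zz i hi hzi
    exact div_ne_zero ((hmemT i).mp hi) hzi
  obtain ⟨z', hz'T, hAz', hσ', hC⟩ :
      ∃ z' : Fin n → ℝ, (∀ i, i ∉ T → z' i = 0) ∧ A z' = 0 ∧
        (∑ i ∈ T, sgn i * z' i) = 0 ∧ ∃ i ∈ T, z' i ≠ 0 ∧ 0 < -(w i / z' i) := by
    have hzi₁ : z i₁.1 ≠ 0 := by rw [hzmem i₁.1 i₁.2]; exact hgi₁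
    rcases lt_or_gt_of_ne (hratio z i₁.1 i₁.2 hzi₁) with h | h
    · exact ⟨z, hzT, hAz, hσ0, i₁.1, i₁.2, hzi₁, by linarith⟩
    · refine ⟨-z, fun i hi => by rw [Pi.neg_apply, hzT i hi, neg_zero],
        by rw [map_neg, hAz, neg_zero], ?_, i₁.1, i₁.2, by simpa using hzi₁, ?_⟩
      · rw [← neg_eq_zero, ← hσ0, ← Finset.sum_neg_distrib]
        exact Finset.sum_congr rfl fun i _ => by simp
      · rw [Pi.neg_apply, div_neg]
        simpa using h
  obtain ⟨j₁, hj₁T, hj₁z, hj₁r⟩ := hC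
  -- the first positive crossing
  set C := T.filter (fun i => z' i ≠ 0 ∧ 0 < -(w i / z' i)) with hCdef
  have hCne : C.Nonempty := ⟨j₁, by rw [hCdef]; exact Finset.mem_filter.mpr ⟨hj₁T, hj₁z, hj₁r⟩⟩
  obtain ⟨ι₁, hι₁C, hι₁min⟩ := C.exists_min_image (fun i => -(w i / z' i)) hCne
  obtain ⟨hι₁T, hι₁z, hι₁r⟩ := Finset.mem_filter.mp hι₁C
  set ts : ℝ := -(w ι₁ / z' ι₁) with hts
  have htspos : 0 < ts := hι₁r
  -- the crossing identity
  have hcross : ∀ i, z' i ≠ 0 → w i + ts * z' i = z' i * (ts - -(w i / z' i)) := by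
    intro i hzi
    field_simp
    ring
  -- sign preservation up to the crossing
  have hsignpres : ∀ i ∈ T, 0 ≤ sgn i * (w i + ts * z' i) := by
    intro i hi
    by_cases hzi : z' i = 0
    · rw [hzi, mul_zero, add_zero, ← habs i hi]; exact abs_nonneg _
    by_cases hiC : i ∈ C
    · -- opposite signs; crossing not yet reached
      have hr : 0 < -(w i / z' i) := (Finset.mem_filter.mp hiC).2.2
      have hrle : ts ≤ -(w i / z' i) := hι₁min i hiC
      have hopp : sgn i * z' i < 0 := by
        have hdivneg : w i / z' i < 0 := by linarith
        rcases div_neg_iff.mp hdivneg with ⟨hw1, hz1⟩ | ⟨hw1, hz1⟩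
        · rw [hsgn]; simp only [hw1, if_pos]; linarith
        · rw [hsgn]
          have : ¬ 0 < w i := by linarith
          simp only [this, if_neg, not_false_iff]
          linarith
      rw [hcross i hzi, ← mul_assoc]
      have h7 : ts - -(w i / z' i) ≤ 0 := by linarith
      nlinarith
    · -- same signs; moving away from zero
      have hr : ¬ (0 < -(w i / z' i)) := by
        intro h
        exact hiC (Finset.mem_filter.mpr ⟨hi, hzi, h⟩)
      have hdivpos : 0 < w i / z' i := by
        rcases lt_or_gt_of_ne (hratio z' i hi hzi) with h | h
        · exact absurd (by linarith) hr
        · exact h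
      have hsame : 0 < sgn i * z' i := by
        rcases div_pos_iff.mp hdivpos with ⟨hw1, hz1⟩ | ⟨hw1, hz1⟩
        · rw [hsgn]; simp only [hw1, if_pos]; linarith
        · rw [hsgn]
          have : ¬ 0 < w i := by linarith
          simp only [this, if_neg, not_false_iff]
          linarith
      have h6 : sgn i * (w i + ts * z' i) = sgn i * w i + ts * (sgn i * z' i) := by ring
      rw [h6, ← habs i hi]
      have : 0 ≤ ts * (sgn i * z' i) := mul_nonneg htspos.le hsame.le
      linarith [abs_nonneg (w i)]
  -- the new solution
  refine ⟨w + ts • z', ?_, ?_, ?_⟩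
  · rw [map_add, map_smul, hAz', smul_zero, add_zero, hw]
  · rw [hline z' hz'T ts hsignpres, hσ', mul_zero, add_zero]
  · have hsub : Finset.univ.filter (fun i => (w + ts • z') i ≠ 0) ⊆ T.erase ι₁ := by
      intro i hi
      rw [Finset.mem_filter] at hi
      have hi2 : w i + ts * z' i ≠ 0 := by simpa [smul_eq_mul] using hi.2
      have hiT : i ∈ T := by
        by_contra hiT
        apply hi2
        have hw0 : w i = 0 := by_contra fun h => hiT ((hmemT i).mpr h)
        rw [hw0, hz'T i hiT, mul_zero, add_zero]
      refine Finset.mem_erase.mpr ⟨?_, hiT⟩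
      intro hii
      apply hi2
      rw [hii, hcross ι₁ hι₁z, ← hts, sub_self, mul_zero]
    calc (Finset.univ.filter (fun i => (w + ts • z') i ≠ 0)).card
        ≤ (T.erase ι₁).card := Finset.card_le_card hsub
      _ < T.card := by
          rw [Finset.card_erase_of_mem hι₁T]
          exact Nat.sub_lt (Finset.card_pos.mpr hTne) Nat.one_pos

/-- there is a sparse minimal-ℓ1-norm solution, with the quantitative bound -/
lemma exists_sparse_min_solution {n m : ℕ} (A : (Fin n → ℝ) →L[ℝ] (Fin m → ℝ))
    {μ : ℝ} (hμ : 0 < μ) (hA : ∀ h : Fin m → ℝ, μ * l1Norm h ≤ linfNorm (transposeApply A h))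
    (b : Fin m → ℝ) :
    ∃ w, A w = b ∧ (∀ v, A v = b → l1Norm w ≤ l1Norm v) ∧
      Set.ncard {i : Fin n | w i ≠ 0} ≤ m ∧ μ * l1Norm w ≤ linfNorm b := by
  classical
  -- a first solution
  obtain ⟨w₀, hw₀, hw₀r⟩ := exists_bounded_solution A hμ hA b
    (r := linfNorm b / μ) (by rw [linf_eq_norm]; positivity)
    (by rw [mul_div_cancel₀]; exact ne_of_gt hμ)
  -- a minimal solution, by compactness
  have hmin : ∃ w, A w = b ∧ ∀ v, A v = b → l1Norm w ≤ l1Norm v := by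
    set S : Set (Fin n → ℝ) := {v | A v = b ∧ l1Norm v ≤ l1Norm w₀} with hS
    have hSne : S.Nonempty := ⟨w₀, hw₀, le_refl _⟩
    have hScompact : IsCompact S := by
      refine (isCompact_closedBall (0 : Fin n → ℝ) (l1Norm w₀)).of_isClosed_subset ?_ ?_
      · exact (isClosed_eq A.continuous continuous_const).inter
          (isClosed_le l1_continuous continuous_const)
      · intro v hv
        rw [Metric.mem_closedBall, dist_zero_right]
        exact (linf_eq_norm v ▸ linf_le_l1 v).trans hv.2
    obtain ⟨w, hwS, hwmin⟩ := hScompact.exists_isMinOn hSne l1_continuous.continuousOn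
    refine ⟨w, hwS.1, fun v hv => ?_⟩
    by_cases hvS : v ∈ S
    · exact hwmin hvS
    · have : l1Norm w₀ < l1Norm v := by
        by_contra h
        exact hvS ⟨hv, le_of_not_gt h⟩
      exact le_trans (hwmin (⟨hw₀, le_refl _⟩ : w₀ ∈ S)) this.le
  obtain ⟨w₁, hw₁, hw₁min⟩ := hmin
  -- sparsify, by strong induction on support size
  have key : ∀ (N : ℕ) (w : Fin n → ℝ), (Finset.univ.filter (fun i => w i ≠ 0)).card ≤ N →
      A w = b → (∀ v, A v = b → l1Norm w ≤ l1Norm v) →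
      ∃ w', A w' = b ∧ l1Norm w' = l1Norm w ∧
        (Finset.univ.filter (fun i => w' i ≠ 0)).card ≤ m := by
    intro N
    induction N with
    | zero => intro w hc hw _; exact ⟨w, hw, rfl, by omega⟩
    | succ N ih =>
      intro w hc hw hwm
      by_cases hcm : (Finset.univ.filter (fun i => w i ≠ 0)).card ≤ m
      · exact ⟨w, hw, rfl, hcm⟩
      · obtain ⟨w', hw', hl1', hc'⟩ := reduce_support A b w hw hwm (by omega)
        have hwm' : ∀ v, A v = b → l1Norm w' ≤ l1Norm v := fun v hv => hl1' ▸ hwm v hv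
        obtain ⟨w'', h1, h2, h3⟩ := ih w' (by omega) hw' hwm'
        exact ⟨w'', h1, by rw [h2, hl1'], h3⟩
  obtain ⟨w, hw, hl1, hcard⟩ := key _ w₁ (le_refl _) hw₁ hw₁min
  refine ⟨w, hw, fun v hv => hl1 ▸ hw₁min v hv, ?_, ?_⟩
  · rw [show {i : Fin n | w i ≠ 0} = ↑(Finset.univ.filter (fun i => w i ≠ 0)) by ext i; simp]
    rw [Set.ncard_coe_finset]
    exact hcard
  · rw [hl1]
    calc μ * l1Norm w₁ ≤ μ * l1Norm w₀ := by
          exact mul_le_mul_of_nonneg_left (hw₁min w₀ hw₀) hμ.le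
      _ ≤ μ * (linfNorm b / μ) := mul_le_mul_of_nonneg_left hw₀r hμ.le
      _ = linfNorm b := by field_simp

lemma l1_sub_le {d : ℕ} (x y : Fin d → ℝ) : l1Norm (x - y) ≤ l1Norm x + l1Norm y := by
  calc l1Norm (x - y) = l1Norm (x + (-1 : ℝ) • y) := by congr 1; module
    _ ≤ l1Norm x + l1Norm ((-1 : ℝ) • y) := l1_add_le _ _
    _ = l1Norm x + l1Norm y := by rw [l1_smul]; norm_num

/-- quantitative Taylor bound for a damped Newton step -/
lemma newton_step {n m : ℕ} {P : (Fin n → ℝ) → (Fin m → ℝ)} (hP : ContDiff ℝ 1 P)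
    {ρ L : ℝ}
    (hLip : ∀ a : Fin n → ℝ, l1Norm a ≤ ρ → ∀ b : Fin n → ℝ, l1Norm b ≤ ρ →
      ∀ v : Fin n → ℝ,
      linfNorm ((fderiv ℝ P a - fderiv ℝ P b) v) ≤ L * l1Norm (a - b) * l1Norm v)
    {u w : Fin n → ℝ} {γ : ℝ} (hγ0 : 0 ≤ γ) (hγ1 : γ ≤ 1)
    (hu : l1Norm u ≤ ρ) (hseg : l1Norm u + γ * l1Norm w ≤ ρ)
    (hw : fderiv ℝ P u w = P u) :
    linfNorm (P (u - γ • w)) ≤ (1 - γ) * linfNorm (P u) + L * γ ^ 2 * l1Norm w ^ 2 / 2 := by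
  set c : ℝ → (Fin n → ℝ) := fun t => u - t • w with hc
  have hcB : ∀ t ∈ Icc (0:ℝ) γ, l1Norm (c t) ≤ ρ := by
    intro t ht
    calc l1Norm (u - t • w) ≤ l1Norm u + l1Norm (t • w) := l1_sub_le _ _
      _ = l1Norm u + |t| * l1Norm w := by rw [l1_smul]
      _ = l1Norm u + t * l1Norm w := by rw [abs_of_nonneg ht.1]
      _ ≤ l1Norm u + γ * l1Norm w := by
          have := mul_le_mul_of_nonneg_right ht.2 (l1_nonneg w)
          linarith
      _ ≤ ρ := hseg
  set h : ℝ → (Fin m → ℝ) := fun t => P (c t) - P u + t • P u with hh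
  have hder : ∀ t : ℝ, HasDerivAt h (P u - fderiv ℝ P (c t) w) t := by
    intro t
    have hc' : HasDerivAt c (-w) t := by
      have h1 : HasDerivAt (fun t : ℝ => t • w) w t := by
        simpa using (hasDerivAt_id t).smul_const w
      have h2 := (hasDerivAt_const t u).sub h1; rw [zero_sub] at h2; exact h2
    have hPd : HasFDerivAt P (fderiv ℝ P (c t)) (c t) :=
      ((hP.differentiable one_ne_zero) (c t)).hasFDerivAt
    have h2 : HasDerivAt (fun t => P (c t)) (fderiv ℝ P (c t) (-w)) t :=
      hPd.comp_hasDerivAt t hc'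
    have h3 : HasDerivAt (fun t : ℝ => t • P u) (P u) t := by
      simpa using (hasDerivAt_id t).smul_const (P u)
    have h4 := (h2.sub_const (P u)).add h3
    have he : fderiv ℝ P (c t) (-w) + P u = P u - fderiv ℝ P (c t) w := by
      rw [map_neg]; abel
    rw [he] at h4
    exact h4
  have hbound : ∀ t ∈ Ico (0:ℝ) γ, ‖P u - fderiv ℝ P (c t) w‖ ≤ L * l1Norm w ^ 2 * t := by
    intro t ht
    have h1 : P u - fderiv ℝ P (c t) w = (fderiv ℝ P u - fderiv ℝ P (c t)) w := by
      rw [ContinuousLinearMap.sub_apply, hw]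
    rw [h1, ← linf_eq_norm]
    have h2 := hLip u hu (c t) (hcB t ⟨ht.1, ht.2.le⟩) w
    have h3 : u - c t = t • w := by rw [hc]; module
    rw [h3, l1_smul, abs_of_nonneg ht.1] at h2
    calc linfNorm ((fderiv ℝ P u - fderiv ℝ P (c t)) w) ≤ L * (t * l1Norm w) * l1Norm w := h2
      _ = L * l1Norm w ^ 2 * t := by ring
  have hmain : ‖h γ‖ ≤ L * l1Norm w ^ 2 / 2 * γ ^ 2 := by
    have hB : ∀ t : ℝ, HasDerivAt (fun t : ℝ => L * l1Norm w ^ 2 / 2 * t ^ 2)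
        (L * l1Norm w ^ 2 * t) t := by
      intro t
      have := (hasDerivAt_pow 2 t).const_mul (L * l1Norm w ^ 2 / 2)
      simpa using this.congr_deriv (by ring)
    have hcont : ContinuousOn h (Icc 0 γ) :=
      (continuous_iff_continuousAt.mpr fun t => (hder t).continuousAt).continuousOn
    have := image_norm_le_of_norm_deriv_right_le_deriv_boundary hcont
      (fun t ht => (hder t).hasDerivWithinAt) ?_ hB ?_ (right_mem_Icc.mpr hγ0)
    · exact this
    · simp [hh, hc]
    · intro t ht
      exact hbound t ht
  have hPγ : P (u - γ • w) = h γ + (1 - γ) • P u := by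
    rw [hh, hc]
    simp only
    module
  rw [hPγ, linf_eq_norm]
  calc ‖h γ + (1 - γ) • P u‖ ≤ ‖h γ‖ + ‖(1 - γ) • P u‖ := norm_add_le _ _
    _ ≤ L * l1Norm w ^ 2 / 2 * γ ^ 2 + |1 - γ| * ‖P u‖ := by
        rw [norm_smul, Real.norm_eq_abs]
        exact add_le_add_left hmain _
    _ = (1 - γ) * linfNorm (P u) + L * γ ^ 2 * l1Norm w ^ 2 / 2 := by
        rw [abs_of_nonneg (by linarith), linf_eq_norm]
        ring

/-- one-step decrease function for the normalized residual -/
noncomputable def dampF (a : ℝ) : ℝ := if a ≤ 1 then a ^ 2 / 2 else a - 1 / 2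

/-- the comparison sequence -/
noncomputable def cSeq (a0 : ℝ) : ℕ → ℝ
  | 0 => a0
  | k + 1 => dampF (cSeq a0 k)

lemma dampF_nonneg {a : ℝ} (ha : 0 ≤ a) : 0 ≤ dampF a := by
  rw [dampF]; split
  · positivity
  · linarith

lemma dampF_mono {x y : ℝ} (hx : 0 ≤ x) (hxy : x ≤ y) : dampF x ≤ dampF y := by
  rw [dampF, dampF]
  split <;> split <;> rename_i h1 h2
  · nlinarith
  · nlinarith
  · linarith
  · linarith

lemma cSeq_nonneg {a0 : ℝ} (ha0 : 0 ≤ a0) : ∀ k, 0 ≤ cSeq a0 k := by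
  intro k
  induction k with
  | zero => exact ha0
  | succ k ih => exact dampF_nonneg ih

section Main
variable {a0 vbar : ℝ} {K : ℕ}

lemma cSeq_linear (hv : vbar = a0 - K / 2) (hhalf : 1 ≤ K → 1 / 2 < vbar) :
    ∀ k ≤ K, cSeq a0 k = a0 - k / 2 := by
  intro k hk
  induction k with
  | zero => simp [cSeq]
  | succ k ih =>
    have hk' : k ≤ K := by omega
    have hK1 : 1 ≤ K := by omega
    have h1 : cSeq a0 k = a0 - k / 2 := ih hk'
    have h2 : 1 < a0 - k / 2 := by
      have : (k : ℝ) ≤ (K : ℝ) - 1 := by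
        have : (k : ℝ) + 1 ≤ (K : ℝ) := by exact_mod_cast hk
        linarith
      have h3 := hhalf hK1
      rw [hv] at h3
      linarith
    rw [cSeq, h1, dampF, if_neg (by linarith)]
    push_cast
    ring

lemma cSeq_quad (hv : vbar = a0 - K / 2) (hhalf : 1 ≤ K → 1 / 2 < vbar)
    (hv0 : 0 < vbar) (hv1 : vbar < 1) :
    ∀ j, cSeq a0 (K + j) ≤ 2 * (vbar / 2) ^ 2 ^ j := by
  have hδ0 : 0 < vbar / 2 := by linarith
  have hδ1 : vbar / 2 < 1 / 2 := by linarith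
  intro j
  induction j with
  | zero =>
    rw [Nat.add_zero, cSeq_linear hv hhalf K le_rfl]
    rw [pow_zero, pow_one]
    linarith [hv]
  | succ j ih =>
    have hδpow : (vbar / 2) ^ 2 ^ j ≤ vbar / 2 := by
      calc (vbar / 2) ^ 2 ^ j ≤ (vbar / 2) ^ 1 :=
            pow_le_pow_of_le_one hδ0.le (by linarith) (Nat.one_le_two_pow)
        _ = vbar / 2 := pow_one _
    have hle1 : 2 * (vbar / 2) ^ 2 ^ j ≤ 1 := by linarith
    have ha0 : 0 ≤ a0 := by
      have : (0:ℝ) ≤ K / 2 := by positivity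
      linarith [hv0, hv ▸ hv0]
    calc cSeq a0 (K + (j+1)) = dampF (cSeq a0 (K + j)) := by rw [← Nat.add_assoc]; rfl
      _ ≤ dampF (2 * (vbar / 2) ^ 2 ^ j) := dampF_mono (cSeq_nonneg ha0 _) ih
      _ = (2 * (vbar / 2) ^ 2 ^ j) ^ 2 / 2 := by rw [dampF, if_pos hle1]
      _ = 2 * (vbar / 2) ^ 2 ^ (j + 1) := by
          have h9 : (vbar / 2) ^ 2 ^ (j + 1) = ((vbar / 2) ^ 2 ^ j) ^ 2 := by
            rw [← pow_mul, ← pow_succ]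
          rw [h9]
          ring

lemma summable_H0 {δ : ℝ} (h0 : 0 ≤ δ) (h1 : δ < 1) : Summable (fun ℓ : ℕ => δ ^ 2 ^ ℓ) := by
  refine Summable.of_nonneg_of_le (fun ℓ => by positivity) (fun ℓ => ?_)
    (summable_geometric_of_lt_one h0 h1)
  exact pow_le_pow_of_le_one h0 h1.le (Nat.lt_two_pow_self (n := ℓ)).le

lemma H0_nonneg {δ : ℝ} (h0 : 0 ≤ δ) : 0 ≤ H0 δ :=
  tsum_nonneg fun ℓ => by positivity

lemma cSeq_partial_sum (hv : vbar = a0 - K / 2) (hhalf : 1 ≤ K → 1 / 2 < vbar)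
    (hv0 : 0 < vbar) (hv1 : vbar < 1) :
    ∀ k, ∑ j ∈ Finset.range k, min (cSeq a0 j) 1 ≤ K + 2 * H0 (vbar / 2) := by
  have hδ0 : 0 ≤ vbar / 2 := by linarith
  have hδ1 : vbar / 2 < 1 := by linarith
  have hH0 := H0_nonneg hδ0
  have ha0 : 0 ≤ a0 := by
    have : (0:ℝ) ≤ K / 2 := by positivity
    linarith [hv ▸ hv0]
  have hone : ∀ S : Finset ℕ, ∑ j ∈ S, min (cSeq a0 j) 1 ≤ S.card := by
    intro S
    calc ∑ j ∈ S, min (cSeq a0 j) 1 ≤ ∑ j ∈ S, 1 :=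
          Finset.sum_le_sum fun j _ => min_le_right _ _
      _ = S.card := by simp
  intro k
  rcases le_or_gt k K with hk | hk
  · calc ∑ j ∈ Finset.range k, min (cSeq a0 j) 1 ≤ (Finset.range k).card := hone _
      _ = (k : ℝ) := by simp
      _ ≤ (K : ℝ) := by exact_mod_cast hk
      _ ≤ K + 2 * H0 (vbar / 2) := by linarith
  · obtain ⟨l, rfl⟩ : ∃ l, k = K + l := ⟨k - K, by omega⟩
    rw [Finset.sum_range_add]
    have h1 : ∑ j ∈ Finset.range K, min (cSeq a0 j) 1 ≤ (K : ℝ) := by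
      calc _ ≤ ((Finset.range K).card : ℝ) := hone _
        _ = (K : ℝ) := by simp
    have h2 : ∑ i ∈ Finset.range l, min (cSeq a0 (K + i)) 1 ≤ 2 * H0 (vbar / 2) := by
      calc ∑ i ∈ Finset.range l, min (cSeq a0 (K + i)) 1
          ≤ ∑ i ∈ Finset.range l, 2 * (vbar / 2) ^ 2 ^ i := by
            refine Finset.sum_le_sum fun i _ => ?_
            exact le_trans (min_le_left _ _) (cSeq_quad hv hhalf hv0 hv1 i)
        _ = 2 * ∑ i ∈ Finset.range l, (vbar / 2) ^ 2 ^ i := by rw [Finset.mul_sum]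
        _ ≤ 2 * H0 (vbar / 2) := by
            refine mul_le_mul_of_nonneg_left ?_ (by norm_num)
            exact Summable.sum_le_tsum _ (fun i _ => by positivity) (summable_H0 hδ0 hδ1)
    linarith
end Main

/-- the key exponent bound -/
lemma exponent_bound {δ e₀ : ℝ} (hδ0 : 0 < δ) (hδ1 : δ < 1) (he₀ : 0 < e₀) (he₀δ : e₀ < δ) :
    1 ≤ ⌈Real.logb 2 (Real.logb δ e₀)⌉ ∧
    δ ^ 2 ^ (⌈Real.logb 2 (Real.logb δ e₀)⌉.toNat) ≤ e₀ := by
  set T := Real.logb δ e₀ with hT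
  have hδne : δ ≠ 1 := ne_of_lt hδ1
  have hrT : δ ^ T = e₀ := Real.rpow_logb hδ0 hδne he₀
  have hT1 : 1 < T := by
    by_contra h
    push_neg at h
    have : δ ≤ δ ^ T := by
      calc δ = δ ^ (1:ℝ) := (Real.rpow_one δ).symm
        _ ≤ δ ^ T := Real.rpow_le_rpow_of_exponent_ge hδ0 hδ1.le h
    rw [hrT] at this
    linarith
  have hj1 : 1 ≤ ⌈Real.logb 2 T⌉ := by
    have : 0 < Real.logb 2 T := Real.logb_pos one_lt_two hT1
    exact Int.ceil_pos.mpr this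
  refine ⟨hj1, ?_⟩
  set j := ⌈Real.logb 2 T⌉.toNat with hjdef
  have hjlog : Real.logb 2 T ≤ (j : ℝ) := by
    have h1 : Real.logb 2 T ≤ (⌈Real.logb 2 T⌉ : ℝ) := Int.le_ceil _
    have h2 : (⌈Real.logb 2 T⌉ : ℝ) = (j : ℝ) := by
      rw [hjdef]
      exact_mod_cast (Int.toNat_of_nonneg (by omega)).symm
    linarith
  have h2j : T ≤ (2:ℝ) ^ (j:ℕ) := by
    have hTpos : 0 < T := by linarith
    calc T = (2:ℝ) ^ Real.logb 2 T := (Real.rpow_logb two_pos (by norm_num) hTpos).symm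
      _ ≤ (2:ℝ) ^ ((j:ℕ):ℝ) := Real.rpow_le_rpow_of_exponent_le one_le_two hjlog
      _ = (2:ℝ) ^ (j:ℕ) := Real.rpow_natCast 2 j
  calc δ ^ 2 ^ j = δ ^ (((2 ^ j : ℕ) : ℝ)) := by
        rw [Real.rpow_natCast]
      _ ≤ δ ^ T := by
        refine Real.rpow_le_rpow_of_exponent_ge hδ0 hδ1.le ?_
        push_cast
        exact h2j
      _ = e₀ := hrT

set_option maxHeartbeats 1000000 in
/-- Proposition 1: sparsity of the approximate solution: there
exists `û` with at most `K_ε·m` nonzero coordinates and `‖P(û)‖_∞ ≤ ε`; namely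
`û = u^{K_ε}` for a damped sparse-Newton sequence from `u⁰ = 0` whose step
directions `wᵏ` are minimal-ℓ1-norm solutions of `P'(uᵏ)w = P(uᵏ)` with at most
`m` nonzero coordinates. -/
theorem statement14 {n m : ℕ} (P : (Fin n → ℝ) → (Fin m → ℝ)) (hP : ContDiff ℝ 1 P)
    (s : ℝ) (hs : s = linfNorm (P 0)) (hspos : 0 < s)
    (ρ : ℝ) (hρ : 0 < ρ) (Bρ : Set (Fin n → ℝ)) (hB : Bρ = {v | l1Norm v ≤ ρ})
    (μ : ℝ) (hμ : 0 < μ)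
    (hA' : ∀ v ∈ Bρ, ∀ h : Fin m → ℝ,
      μ * l1Norm h ≤ linfNorm (transposeApply (fderiv ℝ P v) h))
    (L : ℝ) (hL : 0 < L)
    (hLip : ∀ a ∈ Bρ, ∀ b ∈ Bρ, ∀ v : Fin n → ℝ,
      linfNorm ((fderiv ℝ P a - fderiv ℝ P b) v) ≤ L * l1Norm (a - b) * l1Norm v)
    (kmax : ℤ) (hkmax : kmax = max 0 (⌈2 * (L * s / μ ^ 2)⌉ - 2))
    (vbar : ℝ) (hvbar : vbar = L * s / μ ^ 2 - (kmax : ℝ) / 2)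
    (hρbig : ρ ≥ μ / L * ((kmax : ℝ) + 2 * H0 (vbar / 2)))
    (hvbar1 : vbar < 1) (ε : ℝ) (hε : 0 < ε) (hεsmall : ε < μ ^ 2 * vbar / L)
    (Kε : ℤ)
    (hKε : Kε = kmax + ⌈Real.logb 2 (Real.logb (vbar / 2) (ε * L / (2 * μ ^ 2)))⌉) :
    ∃ (u w : ℕ → Fin n → ℝ) (γ : ℕ → ℝ),
      -- a damped sparse-Newton sequence from `u⁰ = 0` ...
      u 0 = 0 ∧
      (∀ k, fderiv ℝ P (u k) (w k) = P (u k)) ∧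
      (∀ k, ∀ v : Fin n → ℝ, fderiv ℝ P (u k) v = P (u k) →
        l1Norm (w k) ≤ l1Norm v) ∧
      (∀ k, γ k = if P (u k) = 0 then 1
        else min 1 (μ ^ 2 / (L * linfNorm (P (u k))))) ∧
      (∀ k, u (k + 1) = u k - γ k • w k) ∧
      -- ... whose step directions have at most `m` nonzero coordinates ...
      (∀ k, Set.ncard {i : Fin n | w k i ≠ 0} ≤ m) ∧
      -- ... such that `û = u^{K_ε}` is sparse and an `ε`-approximate solution:
      ∃ uhat : Fin n → ℝ, uhat = u Kε.toNat ∧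
        (Set.ncard {i : Fin n | uhat i ≠ 0} : ℤ) ≤ Kε * m ∧
        linfNorm (P uhat) ≤ ε := by
  classical
  have hμ2 : (0:ℝ) < μ ^ 2 := by positivity
  set a0 : ℝ := L * s / μ ^ 2 with ha0
  have ha0pos : 0 < a0 := by positivity
  have hkmax0 : 0 ≤ kmax := hkmax ▸ le_max_left _ _
  set K : ℕ := kmax.toNat with hKdef
  have hKcast : (K : ℝ) = (kmax : ℝ) := by
    rw [hKdef]
    exact_mod_cast congrArg (Int.cast : ℤ → ℝ) (Int.toNat_of_nonneg hkmax0)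
  have hvK : vbar = a0 - K / 2 := by rw [hvbar, hKcast, ha0]
  have hv0 : 0 < vbar := by
    by_contra h
    push_neg at h
    have : μ ^ 2 * vbar / L ≤ 0 := by
      apply div_nonpos_of_nonpos_of_nonneg _ hL.le
      exact mul_nonpos_of_nonneg_of_nonpos (by positivity) h
    linarith
  have hhalf : 1 ≤ K → 1 / 2 < vbar := by
    intro h1
    have hk1 : 1 ≤ kmax := by omega
    have hkm : kmax = ⌈2 * a0⌉ - 2 := by omega
    have hceil : (⌈2 * a0⌉ : ℝ) < 2 * a0 + 1 := Int.ceil_lt_add_one _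
    rw [hvbar, hkm]
    push_cast
    linarith
  set δ : ℝ := vbar / 2 with hδdef
  have hδ0 : 0 < δ := by rw [hδdef]; linarith
  have hδ1 : δ < 1 := by rw [hδdef]; linarith
  set e₀ : ℝ := ε * L / (2 * μ ^ 2) with he₀def
  have he₀pos : 0 < e₀ := by rw [he₀def]; positivity
  have he₀δ : e₀ < δ := by
    rw [he₀def, hδdef]
    rw [div_lt_div_iff₀ (by positivity) (by norm_num)]
    have h1 : ε * L < μ ^ 2 * vbar := by
      rw [lt_div_iff₀ hL] at hεsmall
      linarith
    nlinarith
  obtain ⟨hj1, hjpow⟩ := exponent_bound hδ0 hδ1 he₀pos he₀δ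
  set j : ℤ := ⌈Real.logb 2 (Real.logb δ e₀)⌉ with hjdef
  have hKεj : Kε = kmax + j := hKε
  have hKε0 : 0 ≤ Kε := by omega
  have hKεtoNat : Kε.toNat = K + j.toNat := by omega
  -- the step-direction chooser
  set pickP : (Fin n → ℝ) → (Fin n → ℝ) → Prop := fun v w =>
    fderiv ℝ P v w = P v ∧ (∀ x, fderiv ℝ P v x = P v → l1Norm w ≤ l1Norm x) ∧
      Set.ncard {i : Fin n | w i ≠ 0} ≤ m ∧ μ * l1Norm w ≤ linfNorm (P v) with hpickP
  obtain ⟨pick, hpick⟩ : ∃ pick : (Fin n → ℝ) → (Fin n → ℝ),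
      ∀ v, l1Norm v ≤ ρ → pickP v (pick v) := by
    refine ⟨fun v => if h : ∃ w, pickP v w then h.choose else 0, fun v hv => ?_⟩
    have hAv : ∀ h : Fin m → ℝ,
        μ * l1Norm h ≤ linfNorm (transposeApply (fderiv ℝ P v) h) :=
      hA' v (by rw [hB]; exact hv)
    have hex : ∃ w, pickP v w := by
      obtain ⟨w, h1, h2, h3, h4⟩ := exists_sparse_min_solution (fderiv ℝ P v) hμ hAv (P v)
      exact ⟨w, h1, h2, h3, h4⟩
    simp only [dif_pos hex]
    exact hex.choose_spec
  -- the damping factor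
  obtain ⟨γf, hγfdef⟩ : ∃ γf : (Fin n → ℝ) → ℝ,
      ∀ v, γf v = if P v = 0 then 1 else min 1 (μ ^ 2 / (L * linfNorm (P v))) :=
    ⟨fun v => if P v = 0 then 1 else min 1 (μ ^ 2 / (L * linfNorm (P v))), fun v => rfl⟩
  have hγ01 : ∀ v, 0 ≤ γf v ∧ γf v ≤ 1 := by
    intro v
    rw [hγfdef]
    split
    · norm_num
    · constructor
      · apply le_min zero_le_one
        apply div_nonneg (by positivity)
        exact mul_nonneg hL.le (by rw [linf_eq_norm]; positivity)
      · exact min_le_left _ _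
  -- the iteration
  obtain ⟨u, hu0, hustep⟩ : ∃ u : ℕ → Fin n → ℝ, u 0 = 0 ∧
      ∀ k, u (k + 1) = u k - γf (u k) • pick (u k) :=
    ⟨fun k => Nat.rec (0 : Fin n → ℝ) (fun _ uk => uk - γf uk • pick uk) k, rfl, fun k => rfl⟩
  -- the budget bound
  have hsum_le : ∀ k, (μ / L) * ∑ i ∈ Finset.range k, min (cSeq a0 i) 1 ≤ ρ := by
    intro k
    have h1 := cSeq_partial_sum hvK hhalf hv0 hvbar1 k
    calc (μ / L) * ∑ i ∈ Finset.range k, min (cSeq a0 i) 1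
        ≤ (μ / L) * ((K : ℝ) + 2 * H0 δ) := by
          exact mul_le_mul_of_nonneg_left h1 (by positivity)
      _ = μ / L * ((kmax : ℝ) + 2 * H0 (vbar / 2)) := by rw [hKcast, hδdef]
      _ ≤ ρ := hρbig
  -- the main invariant
  have key : ∀ k, L * linfNorm (P (u k)) / μ ^ 2 ≤ cSeq a0 k ∧
      l1Norm (u k) ≤ (μ / L) * ∑ i ∈ Finset.range k, min (cSeq a0 i) 1 := by
    intro k
    induction k with
    | zero =>
      constructor
      · rw [hu0, ← hs, cSeq]
      · rw [hu0]
        simp [l1Norm]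
    | succ k ih =>
      obtain ⟨iha, ihl⟩ := ih
      have huk : l1Norm (u k) ≤ ρ := ihl.trans (hsum_le k)
      obtain ⟨hw1, hw2, hw3, hw4⟩ := hpick (u k) huk
      set p : ℝ := linfNorm (P (u k)) with hpdef
      set a : ℝ := L * p / μ ^ 2 with hadef
      have hp0 : 0 ≤ p := by rw [hpdef, linf_eq_norm]; positivity
      have ha0' : 0 ≤ a := by positivity
      have hcnn : 0 ≤ cSeq a0 k := cSeq_nonneg ha0pos.le k
      obtain ⟨hγ0, hγ1⟩ := hγ01 (u k)
      have hl1w : l1Norm (pick (u k)) ≤ p / μ := by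
        rw [le_div_iff₀ hμ, mul_comm]
        exact hw4
      -- step-length budget
      have hstep : γf (u k) * l1Norm (pick (u k)) ≤ (μ / L) * min (cSeq a0 k) 1 := by
        have hmin : γf (u k) * l1Norm (pick (u k)) ≤ (μ / L) * min a 1 := by
          by_cases hP0 : P (u k) = 0
          · have hpz : p = 0 := by rw [hpdef, hP0, linf_eq_norm, norm_zero]
            have hwz : l1Norm (pick (u k)) = 0 := by
              have := hw4
              rw [hpz] at this
              have h2 := l1_nonneg (pick (u k))
              nlinarith
            rw [hwz, mul_zero]
            have : min a 1 = 0 := by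
              rw [hadef, hpz]
              simp
            rw [this, mul_zero]
          · have hppos : 0 < p := by
              rcases hp0.lt_or_eq with h | h
              · exact h
              · exfalso
                apply hP0
                have : linfNorm (P (u k)) ≤ 0 := by rw [← hpdef, ← h]
                rw [linf_eq_norm] at this
                simpa using le_antisymm this (norm_nonneg _)
            have hγval : γf (u k) = min 1 (μ ^ 2 / (L * p)) := by
              rw [hγfdef, if_neg hP0, hpdef]
            have heq : min 1 (μ ^ 2 / (L * p)) * (p / μ) = (μ / L) * min a 1 := by
              rcases le_total a 1 with hc | hc
              · have h1 : 1 ≤ μ ^ 2 / (L * p) := by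
                  rw [le_div_iff₀ (by positivity)]
                  rw [hadef, div_le_one hμ2] at hc
                  linarith
                rw [min_eq_left h1, min_eq_left hc, one_mul, hadef]
                field_simp
              · have h1 : μ ^ 2 / (L * p) ≤ 1 := by
                  rw [div_le_one (by positivity)]
                  rw [hadef, le_div_iff₀ hμ2] at hc
                  linarith
                rw [min_eq_right h1, min_eq_right hc, mul_one]
                field_simp
              -- done
            calc γf (u k) * l1Norm (pick (u k)) ≤ γf (u k) * (p / μ) :=
                  mul_le_mul_of_nonneg_left hl1w hγ0
              _ = (μ / L) * min a 1 := by rw [hγval, heq]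
        refine hmin.trans ?_
        refine mul_le_mul_of_nonneg_left ?_ (by positivity)
        exact min_le_min iha le_rfl
      -- new length bound
      have hl1new : l1Norm (u (k + 1)) ≤
          (μ / L) * ∑ i ∈ Finset.range (k + 1), min (cSeq a0 i) 1 := by
        rw [hustep k, Finset.sum_range_succ, mul_add]
        calc l1Norm (u k - γf (u k) • pick (u k))
            ≤ l1Norm (u k) + l1Norm (γf (u k) • pick (u k)) := l1_sub_le _ _
          _ = l1Norm (u k) + γf (u k) * l1Norm (pick (u k)) := by
              rw [l1_smul, abs_of_nonneg hγ0]
          _ ≤ _ := add_le_add ihl hstep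
      refine ⟨?_, hl1new⟩
      -- residual decrease
      have hseg : l1Norm (u k) + γf (u k) * l1Norm (pick (u k)) ≤ ρ := by
        have := hsum_le (k + 1)
        rw [Finset.sum_range_succ, mul_add] at this
        linarith [add_le_add ihl hstep]
      have hLip' : ∀ x : Fin n → ℝ, l1Norm x ≤ ρ → ∀ y : Fin n → ℝ, l1Norm y ≤ ρ →
          ∀ v : Fin n → ℝ,
          linfNorm ((fderiv ℝ P x - fderiv ℝ P y) v) ≤ L * l1Norm (x - y) * l1Norm v :=
        fun x hx y hy v => hLip x (by rw [hB]; exact hx) y (by rw [hB]; exact hy) v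
      have hns := newton_step hP hLip' hγ0 hγ1 huk hseg hw1
      rw [← hustep k, ← hpdef] at hns
      have hdamp : L * linfNorm (P (u (k + 1))) / μ ^ 2 ≤ dampF a := by
        by_cases hP0 : P (u k) = 0
        · have hpz : p = 0 := by rw [hpdef, hP0, linf_eq_norm, norm_zero]
          have hwz : l1Norm (pick (u k)) = 0 := by
            have := hw4
            rw [hpz] at this
            have h2 := l1_nonneg (pick (u k))
            nlinarith
          have : linfNorm (P (u (k + 1))) ≤ 0 := by
            rw [hpz, hwz] at hns
            calc linfNorm (P (u (k+1))) ≤ (1 - γf (u k)) * 0 + L * γf (u k) ^ 2 * 0 ^ 2 / 2 := hns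
              _ = 0 := by ring
          have hd0 : 0 ≤ dampF a := dampF_nonneg ha0'
          calc L * linfNorm (P (u (k+1))) / μ ^ 2 ≤ 0 := by
                apply div_nonpos_of_nonpos_of_nonneg _ hμ2.le
                exact mul_nonpos_of_nonneg_of_nonpos hL.le this
            _ ≤ dampF a := hd0
        · have hppos : 0 < p := by
            rcases hp0.lt_or_eq with h | h
            · exact h
            · exfalso
              apply hP0
              have h9 : linfNorm (P (u k)) ≤ 0 := by rw [← hpdef, ← h]
              rw [linf_eq_norm] at h9
              simpa using le_antisymm h9 (norm_nonneg _)
          have hγval : γf (u k) = min 1 (μ ^ 2 / (L * p)) := by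
            rw [hγfdef, if_neg hP0, hpdef]
          have hwsq : l1Norm (pick (u k)) ^ 2 ≤ (p / μ) ^ 2 :=
            pow_le_pow_left₀ (l1_nonneg _) hl1w 2
          rcases le_or_gt a 1 with hc | hc
          · -- full Newton step
            have h1 : 1 ≤ μ ^ 2 / (L * p) := by
              rw [le_div_iff₀ (by positivity)]
              rw [hadef, div_le_one hμ2] at hc
              linarith
            have hγeq : γf (u k) = 1 := by rw [hγval, min_eq_left h1]
            rw [hγeq] at hns
            have h2 : linfNorm (P (u (k+1))) ≤ L * (p / μ) ^ 2 / 2 := by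
              calc linfNorm (P (u (k+1)))
                  ≤ (1 - 1) * p + L * 1 ^ 2 * l1Norm (pick (u k)) ^ 2 / 2 := hns
                _ = L * l1Norm (pick (u k)) ^ 2 / 2 := by ring
                _ ≤ L * (p / μ) ^ 2 / 2 := by nlinarith
            rw [dampF, if_pos hc]
            calc L * linfNorm (P (u (k+1))) / μ ^ 2 ≤ L * (L * (p / μ) ^ 2 / 2) / μ ^ 2 := by
                  gcongr
              _ = (L * p / μ ^ 2) ^ 2 / 2 := by field_simp
              _ = a ^ 2 / 2 := by rw [hadef]
          · -- damped step
            have h1 : μ ^ 2 / (L * p) ≤ 1 := by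
              rw [div_le_one (by positivity)]
              rw [hadef, lt_div_iff₀ hμ2] at hc
              linarith
            have hγeq : γf (u k) = μ ^ 2 / (L * p) := by rw [hγval, min_eq_right h1]
            rw [hγeq] at hns
            have hg0 : (0:ℝ) ≤ L * (μ ^ 2 / (L * p)) ^ 2 / 2 := by positivity
            have e1 : (1 - μ ^ 2 / (L * p)) * p + L * (μ ^ 2 / (L * p)) ^ 2 * (p / μ) ^ 2 / 2
                = p - μ ^ 2 / (2 * L) := by
              field_simp
              ring
            have h2 : linfNorm (P (u (k+1))) ≤ p - μ ^ 2 / (2 * L) := by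
              calc linfNorm (P (u (k+1)))
                  ≤ (1 - μ ^ 2 / (L * p)) * p
                    + L * (μ ^ 2 / (L * p)) ^ 2 * l1Norm (pick (u k)) ^ 2 / 2 := hns
                _ ≤ (1 - μ ^ 2 / (L * p)) * p
                    + L * (μ ^ 2 / (L * p)) ^ 2 * (p / μ) ^ 2 / 2 := by
                    have := mul_le_mul_of_nonneg_left hwsq
                      (by positivity : (0:ℝ) ≤ L * (μ ^ 2 / (L * p)) ^ 2)
                    linarith
                _ = p - μ ^ 2 / (2 * L) := e1
            rw [dampF, if_neg (not_le.mpr hc)]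
            have e2 : L * (p - μ ^ 2 / (2 * L)) = L * p - μ ^ 2 / 2 := by
              field_simp
            have h3 : L * linfNorm (P (u (k+1))) ≤ L * p - μ ^ 2 / 2 := by
              have := mul_le_mul_of_nonneg_left h2 hL.le
              linarith [e2]
            have e3 : (L * p - μ ^ 2 / 2) / μ ^ 2 = L * p / μ ^ 2 - 1 / 2 := by
              rw [sub_div]
              congr 1
              rw [div_div, div_eq_div_iff (by positivity) (by norm_num : (2:ℝ) ≠ 0)]
              ring
            calc L * linfNorm (P (u (k+1))) / μ ^ 2 ≤ (L * p - μ ^ 2 / 2) / μ ^ 2 := by gcongr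
              _ = a - 1 / 2 := by rw [e3, hadef]
      calc L * linfNorm (P (u (k+1))) / μ ^ 2 ≤ dampF a := hdamp
        _ ≤ dampF (cSeq a0 k) := dampF_mono ha0' iha
        _ = cSeq a0 (k + 1) := rfl
  -- assemble the answer
  have hukρ : ∀ k, l1Norm (u k) ≤ ρ := fun k => (key k).2.trans (hsum_le k)
  have hpickk : ∀ k, pickP (u k) (pick (u k)) := fun k => hpick (u k) (hukρ k)
  refine ⟨u, fun k => pick (u k), fun k => γf (u k), hu0,
    fun k => (hpickk k).1, fun k => (hpickk k).2.1, fun k => hγfdef (u k), hustep,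
    fun k => (hpickk k).2.2.1, u Kε.toNat, rfl, ?_, ?_⟩
  · -- sparsity of the final iterate
    have hcard : ∀ k, Set.ncard {i : Fin n | u k i ≠ 0} ≤ k * m := by
      intro k
      induction k with
      | zero =>
        rw [hu0]
        simp
      | succ k ih =>
        have hsub : {i : Fin n | u (k + 1) i ≠ 0} ⊆
            {i : Fin n | u k i ≠ 0} ∪ {i : Fin n | pick (u k) i ≠ 0} := by
          intro i hi
          simp only [Set.mem_setOf_eq, Set.mem_union]
          by_contra h
          push_neg at h
          apply hi
          rw [hustep k]
          simp [h.1, h.2]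
        calc Set.ncard {i : Fin n | u (k + 1) i ≠ 0}
            ≤ Set.ncard ({i : Fin n | u k i ≠ 0} ∪ {i : Fin n | pick (u k) i ≠ 0}) :=
              Set.ncard_le_ncard hsub (Set.toFinite _)
          _ ≤ Set.ncard {i : Fin n | u k i ≠ 0} + Set.ncard {i : Fin n | pick (u k) i ≠ 0} :=
              Set.ncard_union_le _ _
          _ ≤ k * m + m := add_le_add ih ((hpickk k).2.2.1)
          _ = (k + 1) * m := by ring
    calc (Set.ncard {i : Fin n | u Kε.toNat i ≠ 0} : ℤ)
        ≤ (Kε.toNat * m : ℕ) := by exact_mod_cast hcard Kε.toNat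
      _ = Kε * m := by
          push_cast
          rw [Int.toNat_of_nonneg hKε0]
  · -- the residual bound
    have h2 := cSeq_quad hvK hhalf hv0 hvbar1 j.toNat
    have h3 : L * linfNorm (P (u Kε.toNat)) / μ ^ 2 ≤ 2 * e₀ := by
      calc L * linfNorm (P (u Kε.toNat)) / μ ^ 2 ≤ cSeq a0 Kε.toNat := (key _).1
        _ = cSeq a0 (K + j.toNat) := by rw [hKεtoNat]
        _ ≤ 2 * (vbar / 2) ^ 2 ^ j.toNat := h2
        _ ≤ 2 * e₀ := by
            rw [← hδdef]
            linarith [hjpow]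
    rw [he₀def] at h3
    rw [div_le_iff₀ hμ2] at h3
    have : L * linfNorm (P (u Kε.toNat)) ≤ ε * L := by
      have e4 : 2 * (ε * L / (2 * μ ^ 2)) * μ ^ 2 = ε * L := by
        field_simp
      linarith [e4]
    nlinarith [this]
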